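/- The class of gluing-parallel posets is closed under induced subposets: if P is a gp-poset and x ∈ P, then P \ {x} with the induced order is again a gp-poset. -/

import Mathlib

/-- Interval order condition for a strict order relation. -/
def IsIntervalOrderRel {α : Type} (lt : α → α → Prop) : Prop :=
  ∀ w x y z, lt w y → lt x z → lt w z ∨ lt x y

/-- Serial composition (ordinal sum) of two strict orders. -/
def serialLt {α β : Type} (r : α → α → Prop) (s : β → β → Prop) :
    α ⊕ β → α ⊕ β → Prop
  | .inl a, .inl b => r a b
  | .inr a, .inr b => s a b
  | .inl _, .inr _ => True
  | .inr _, .inl _ => False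

/-- Parallel composition (disjoint union) of two strict orders. -/
def parallelLt {α β : Type} (r : α → α → Prop) (s : β → β → Prop) :
    α ⊕ β → α ⊕ β → Prop
  | .inl a, .inl b => r a b
  | .inr a, .inr b => s a b
  | _, _ => False

/-- A poset with interfaces: a finite strict poset with injective interface
maps from the discrete posets `[n]` (onto minimal elements) and `[m]` (onto
maximal elements). -/
structure Iposet (n m : ℕ) where
  carrier : Type
  fin : Finite carrier
  lt : carrier → carrier → Prop
  irrefl : ∀ x, ¬ lt x x
  trans : ∀ x y z, lt x y → lt y z → lt x z
  s : Fin n → carrier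
  t : Fin m → carrier
  s_inj : Function.Injective s
  t_inj : Function.Injective t
  s_min : ∀ i x, ¬ lt x (s i)
  t_max : ∀ i x, ¬ lt (t i) x

namespace Iposet

/-- Parallel composition of iposets. -/
def par {n₁ m₁ n₂ m₂ : ℕ} (P : Iposet n₁ m₁) (Q : Iposet n₂ m₂) :
    Iposet (n₁ + n₂) (m₁ + m₂) where
  carrier := P.carrier ⊕ Q.carrier
  fin := by have := P.fin; have := Q.fin; exact inferInstance
  lt a b := match a, b with
    | .inl x, .inl y => P.lt x y
    | .inr x, .inr y => Q.lt x y
    | _, _ => False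
  irrefl := by
    rintro (x | x) h
    · exact P.irrefl x h
    · exact Q.irrefl x h
  trans := by
    rintro (x | x) (y | y) (z | z) h1 h2 <;>
      first
        | exact P.trans _ _ _ h1 h2
        | exact Q.trans _ _ _ h1 h2
        | exact h1.elim
        | exact h2.elim
  s := fun i =>
    if h : (i : ℕ) < n₁ then .inl (P.s ⟨i, h⟩)
    else .inr (Q.s ⟨(i : ℕ) - n₁, by have := i.isLt; omega⟩)
  t := fun i =>
    if h : (i : ℕ) < m₁ then .inl (P.t ⟨i, h⟩)
    else .inr (Q.t ⟨(i : ℕ) - m₁, by have := i.isLt; omega⟩)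
  s_inj := by
    intro i j h
    rcases Nat.lt_or_ge (i : ℕ) n₁ with hi | hi <;>
      rcases Nat.lt_or_ge (j : ℕ) n₁ with hj | hj
    · simp only [dif_pos hi, dif_pos hj] at h
      have h2 := P.s_inj (Sum.inl.inj h)
      simp only [Fin.mk.injEq] at h2
      exact Fin.ext h2
    · simp only [dif_pos hi, dif_neg (Nat.not_lt.mpr hj)] at h
      exact absurd h (by simp)
    · simp only [dif_neg (Nat.not_lt.mpr hi), dif_pos hj] at h
      exact absurd h (by simp)
    · simp only [dif_neg (Nat.not_lt.mpr hi), dif_neg (Nat.not_lt.mpr hj)] at h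
      have h2 := Q.s_inj (Sum.inr.inj h)
      simp only [Fin.mk.injEq] at h2
      exact Fin.ext (by omega)
  t_inj := by
    intro i j h
    rcases Nat.lt_or_ge (i : ℕ) m₁ with hi | hi <;>
      rcases Nat.lt_or_ge (j : ℕ) m₁ with hj | hj
    · simp only [dif_pos hi, dif_pos hj] at h
      have h2 := P.t_inj (Sum.inl.inj h)
      simp only [Fin.mk.injEq] at h2
      exact Fin.ext h2
    · simp only [dif_pos hi, dif_neg (Nat.not_lt.mpr hj)] at h
      exact absurd h (by simp)
    · simp only [dif_neg (Nat.not_lt.mpr hi), dif_pos hj] at h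
      exact absurd h (by simp)
    · simp only [dif_neg (Nat.not_lt.mpr hi), dif_neg (Nat.not_lt.mpr hj)] at h
      have h2 := Q.t_inj (Sum.inr.inj h)
      simp only [Fin.mk.injEq] at h2
      exact Fin.ext (by omega)
  s_min := by
    intro i a
    rcases Nat.lt_or_ge (i : ℕ) n₁ with hi | hi
    · simp only [dif_pos hi]
      rcases a with x | x
      · exact P.s_min _ x
      · exact fun h => h
    · simp only [dif_neg (Nat.not_lt.mpr hi)]
      rcases a with x | x
      · exact fun h => h
      · exact Q.s_min _ x
  t_max := by
    intro i a
    rcases Nat.lt_or_ge (i : ℕ) m₁ with hi | hi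
    · simp only [dif_pos hi]
      rcases a with x | x
      · exact P.t_max _ x
      · exact fun h => h
    · simp only [dif_neg (Nat.not_lt.mpr hi)]
      rcases a with x | x
      · exact fun h => h
      · exact Q.t_max _ x

open Classical in
/-- Gluing composition of iposets: targets of `P` are identified with sources
of `Q`, and every non-target point of `P` is ordered below every non-source
point of `Q`. -/
noncomputable def glue {n m k : ℕ} (P : Iposet n m) (Q : Iposet m k) :
    Iposet n k where
  carrier := P.carrier ⊕ {q : Q.carrier // ¬ ∃ j, Q.s j = q}
  fin := by have := P.fin; have := Q.fin; exact inferInstance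
  lt a b := match a, b with
    | .inl x, .inl y => P.lt x y
    | .inl x, .inr q => (¬ ∃ i, P.t i = x) ∨ (∃ i, P.t i = x ∧ Q.lt (Q.s i) q.val)
    | .inr p, .inr q => Q.lt p.val q.val
    | .inr _, .inl _ => False
  irrefl := by
    rintro (x | q) h
    · exact P.irrefl x h
    · exact Q.irrefl q.val h
  trans := by
    rintro (x | x) (y | y) (z | z) h1 h2
    · exact P.trans _ _ _ h1 h2
    · left; rintro ⟨j, rfl⟩; exact P.t_max j y h1
    · exact h2.elim
    · rcases h1 with h1 | ⟨i, hi, hlt⟩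
      · exact Or.inl h1
      · exact Or.inr ⟨i, hi, Q.trans _ _ _ hlt h2⟩
    · exact h1.elim
    · exact h1.elim
    · exact h2.elim
    · exact Q.trans _ _ _ h1 h2
  s := fun i => .inl (P.s i)
  t := fun i =>
    if h : ∃ j, Q.s j = Q.t i then .inl (P.t h.choose) else .inr ⟨Q.t i, h⟩
  s_inj := fun i j h => P.s_inj (Sum.inl.inj h)
  t_inj := by
    intro i j h
    by_cases hi : ∃ a, Q.s a = Q.t i <;> by_cases hj : ∃ a, Q.s a = Q.t j
    · simp only [dif_pos hi, dif_pos hj] at h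
      have h2 := P.t_inj (Sum.inl.inj h)
      apply Q.t_inj
      rw [← hi.choose_spec, ← hj.choose_spec, h2]
    · simp only [dif_pos hi, dif_neg hj] at h
      exact absurd h (by simp)
    · simp only [dif_neg hi, dif_pos hj] at h
      exact absurd h (by simp)
    · simp only [dif_neg hi, dif_neg hj, Sum.inr.injEq, Subtype.mk.injEq] at h
      exact Q.t_inj h
  s_min := by
    rintro i (x | q) h
    · exact P.s_min i x h
    · exact h
  t_max := by
    intro i a
    by_cases hi : ∃ j, Q.s j = Q.t i
    · simp only [dif_pos hi]
      rcases a with x | q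
      · exact P.t_max _ x
      · rintro (h | ⟨i', hi', hlt⟩)
        · exact h ⟨hi.choose, rfl⟩
        · have he : i' = hi.choose := P.t_inj hi'
          subst he
          rw [hi.choose_spec] at hlt
          exact Q.t_max i q.val hlt
    · simp only [dif_neg hi]
      rcases a with x | q
      · exact fun h => h
      · exact fun h => Q.t_max i q.val h

/-- The empty iposet. -/
def ipoEmpty : Iposet 0 0 where
  carrier := PEmpty
  fin := inferInstance
  lt _ _ := False
  irrefl _ h := h
  trans := by intro x; exact x.elim
  s := Fin.elim0
  t := Fin.elim0
  s_inj := by intro i; exact i.elim0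
  t_inj := by intro i; exact i.elim0
  s_min := fun i => i.elim0
  t_max := fun i => i.elim0

/-- The singleton iposet with empty source and empty target interface. -/
def ipo00 : Iposet 0 0 where
  carrier := PUnit
  fin := inferInstance
  lt _ _ := False
  irrefl _ h := h
  trans := by intro _ _ _ h; exact h.elim
  s := Fin.elim0
  t := Fin.elim0
  s_inj := by intro i; exact i.elim0
  t_inj := by intro i; exact i.elim0
  s_min := fun i => i.elim0
  t_max := fun i => i.elim0

/-- The singleton iposet with empty source and full target interface. -/
def ipo01 : Iposet 0 1 where
  carrier := PUnit
  fin := inferInstance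
  lt _ _ := False
  irrefl _ h := h
  trans := by intro _ _ _ h; exact h.elim
  s := Fin.elim0
  t := fun _ => PUnit.unit
  s_inj := by intro i; exact i.elim0
  t_inj := by intro i j _; exact Subsingleton.elim i j
  s_min := fun i => i.elim0
  t_max := fun _ _ h => h

/-- The singleton iposet with full source and empty target interface. -/
def ipo10 : Iposet 1 0 where
  carrier := PUnit
  fin := inferInstance
  lt _ _ := False
  irrefl _ h := h
  trans := by intro _ _ _ h; exact h.elim
  s := fun _ => PUnit.unit
  t := Fin.elim0
  s_inj := by intro i j _; exact Subsingleton.elim i j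
  t_inj := by intro i; exact i.elim0
  s_min := fun _ _ h => h
  t_max := fun i => i.elim0

/-- The singleton iposet with full source and full target interface. -/
def ipo11 : Iposet 1 1 where
  carrier := PUnit
  fin := inferInstance
  lt _ _ := False
  irrefl _ h := h
  trans := by intro _ _ _ h; exact h.elim
  s := fun _ => PUnit.unit
  t := fun _ => PUnit.unit
  s_inj := by intro i j _; exact Subsingleton.elim i j
  t_inj := by intro i j _; exact Subsingleton.elim i j
  s_min := fun _ _ h => h
  t_max := fun _ _ h => h

/-- The identity iposet `n → n`: the discrete poset on `n` points with both
interface maps the identity. -/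
def ipoId (n : ℕ) : Iposet n n where
  carrier := Fin n
  fin := inferInstance
  lt _ _ := False
  irrefl _ h := h
  trans := by intro _ _ _ h; exact h.elim
  s := id
  t := id
  s_inj := fun _ _ h => h
  t_inj := fun _ _ h => h
  s_min := fun _ _ h => h
  t_max := fun _ _ h => h

/-- Isomorphism of iposets: an order-preserving and order-reflecting bijection
commuting with the interface maps (the interface arities must agree). -/
def Iso {n m n' m' : ℕ} (P : Iposet n m) (Q : Iposet n' m') : Prop :=
  n = n' ∧ m = m' ∧
  ∃ f : P.carrier ≃ Q.carrier,
    (∀ x y, P.lt x y ↔ Q.lt (f x) (f y)) ∧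
    (∀ (i : Fin n) (j : Fin n'), (i : ℕ) = (j : ℕ) → f (P.s i) = Q.s j) ∧
    (∀ (i : Fin m) (j : Fin m'), (i : ℕ) = (j : ℕ) → f (P.t i) = Q.t j)

/-- `Subsu P Q` : `P` is subsumed by `Q`, i.e. there is an interface-preserving
order-reflecting bijection from `P` to `Q`. -/
def Subsu {n m : ℕ} (P Q : Iposet n m) : Prop :=
  ∃ f : P.carrier ≃ Q.carrier,
    (∀ x y, Q.lt (f x) (f y) → P.lt x y) ∧
    (∀ i, f (P.s i) = Q.s i) ∧ (∀ i, f (P.t i) = Q.t i)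

/-- Isomorphism of the underlying posets, ignoring interfaces. -/
def PosetIso {n m n' m' : ℕ} (P : Iposet n m) (Q : Iposet n' m') : Prop :=
  ∃ f : P.carrier ≃ Q.carrier, ∀ x y, P.lt x y ↔ Q.lt (f x) (f y)

/-- An iposet is discrete if its order relation is empty. -/
def IsDiscrete {n m : ℕ} (P : Iposet n m) : Prop := ∀ x y, ¬ P.lt x y

/-- A starter is a discrete iposet whose target interface map is bijective. -/
def IsStarter {n m : ℕ} (P : Iposet n m) : Prop :=
  IsDiscrete P ∧ Function.Bijective P.t

/-- A terminator is a discrete iposet whose source interface map is bijective. -/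
def IsTerminator {n m : ℕ} (P : Iposet n m) : Prop :=
  IsDiscrete P ∧ Function.Bijective P.s

/-- A symmetry is a discrete iposet with both interface maps bijective. -/
def IsSymmetry {n m : ℕ} (P : Iposet n m) : Prop :=
  IsDiscrete P ∧ Function.Bijective P.s ∧ Function.Bijective P.t

/-- Interface consistency: for points lying in both interfaces, the numbering
of the source interface agrees with that of the target interface. -/
def InterfaceConsistent {n m : ℕ} (P : Iposet n m) : Prop :=
  ∀ (i j : Fin n) (i' j' : Fin m),
    P.s i = P.t i' → P.s j = P.t j' → ((i : ℕ) < (j : ℕ) ↔ (i' : ℕ) < (j' : ℕ))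

/-- An iposet is connected if its underlying poset is nonempty and any two
points are joined by a zigzag of order relations. -/
def Connected {n m : ℕ} (P : Iposet n m) : Prop :=
  Nonempty P.carrier ∧
    ∀ x y, Relation.ReflTransGen (fun a b => P.lt a b ∨ P.lt b a) x y

/-- The interval order condition on the underlying poset of an iposet. -/
def IsIntervalOrder {n m : ℕ} (P : Iposet n m) : Prop :=
  ∀ w x y z, P.lt w y → P.lt x z → P.lt w z ∨ P.lt x y

/-- The class of gluing-parallel iposets: generated (up to isomorphism) from
the empty iposet and the four singleton iposets by gluing and parallel
composition. -/
inductive IsGP : {n m : ℕ} → Iposet n m → Prop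
  | empty : IsGP ipoEmpty
  | s00 : IsGP ipo00
  | s01 : IsGP ipo01
  | s10 : IsGP ipo10
  | s11 : IsGP ipo11
  | glue {n m k : ℕ} {P : Iposet n m} {Q : Iposet m k} :
      IsGP P → IsGP Q → IsGP (P.glue Q)
  | par {n₁ m₁ n₂ m₂ : ℕ} {P : Iposet n₁ m₁} {Q : Iposet n₂ m₂} :
      IsGP P → IsGP Q → IsGP (P.par Q)
  | iso {n m n' m' : ℕ} {P : Iposet n m} {Q : Iposet n' m'} :
      IsGP P → Iso P Q → IsGP Q

/-- The ⊗-closure of the four singleton iposets (up to isomorphism):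
parallel compositions of finitely many singletons. -/
inductive InParSingles : {n m : ℕ} → Iposet n m → Prop
  | s00 : InParSingles ipo00
  | s01 : InParSingles ipo01
  | s10 : InParSingles ipo10
  | s11 : InParSingles ipo11
  | par {n₁ m₁ n₂ m₂ : ℕ} {P : Iposet n₁ m₁} {Q : Iposet n₂ m₂} :
      InParSingles P → InParSingles Q → InParSingles (P.par Q)
  | iso {n m n' m' : ℕ} {P : Iposet n m} {Q : Iposet n' m'} :
      InParSingles P → Iso P Q → InParSingles Q

/-- The induced subiposet of a poset (iposet with empty interfaces) on a
subset of its points. -/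
def restrict (P : Iposet 0 0) (A : Set P.carrier) : Iposet 0 0 where
  carrier := {x : P.carrier // x ∈ A}
  fin := by have := P.fin; exact inferInstance
  lt a b := P.lt a.val b.val
  irrefl a := P.irrefl a.val
  trans := fun a b c h1 h2 => P.trans _ _ _ h1 h2
  s := Fin.elim0
  t := Fin.elim0
  s_inj := by intro i; exact i.elim0
  t_inj := by intro i; exact i.elim0
  s_min := fun i => i.elim0
  t_max := fun i => i.elim0

end Iposet

namespace Iposet

/-- Removal data: `R` is `Q` with the points of `A` removed and the
interfaces restricted. -/
structure RemData {n m n' m' : ℕ} (Q : Iposet n m) (A : Set Q.carrier)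
    (R : Iposet n' m') where
  f : {y : Q.carrier // y ∉ A} ≃ R.carrier
  es : Fin n' → Fin n
  et : Fin m' → Fin m
  es_mono : StrictMono es
  et_mono : StrictMono et
  s_mem : ∀ i, Q.s i ∉ A ↔ ∃ k, es k = i
  t_mem : ∀ j, Q.t j ∉ A ↔ ∃ k, et k = j
  lt_iff : ∀ a b : {y : Q.carrier // y ∉ A}, Q.lt a.1 b.1 ↔ R.lt (f a) (f b)
  s_eq : ∀ k (h : Q.s (es k) ∉ A), R.s k = f ⟨Q.s (es k), h⟩
  t_eq : ∀ k (h : Q.t (et k) ∉ A), R.t k = f ⟨Q.t (et k), h⟩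

/-- Two strictly monotone maps into `Fin n` with the same range agree (up
to the induced equality of their domains). -/
lemma strictMono_align {a b n : ℕ} (f : Fin a → Fin n) (g : Fin b → Fin n)
    (hf : StrictMono f) (hg : StrictMono g)
    (h : ∀ i, (∃ k, f k = i) ↔ (∃ k, g k = i)) :
    ∃ e : a = b, ∀ k, f k = g (Fin.cast e k) := by
  have hr : Set.range f = Set.range g := by
    ext i; simpa [Set.mem_range] using h i
  have hab : a = b := by
    have h1 := Nat.card_range_of_injective hf.injective
    have h2 := Nat.card_range_of_injective hg.injective
    rw [hr, h2] at h1
    simpa using h1.symm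
  subst hab
  refine ⟨rfl, ?_⟩
  have : IsWellFounded (Fin a) (· < ·) := inferInstance
  have := (hf.range_inj hg).mp hr
  intro k; rw [this]; rfl


/-- Removing the unique point of a singleton yields the empty iposet. -/
noncomputable def remPunit {n m : ℕ} (Q : Iposet n m) (hsub : Subsingleton Q.carrier)
    (x : Q.carrier) : RemData Q {x} ipoEmpty where
  f := by
    have : IsEmpty {y : Q.carrier // y ∉ ({x} : Set Q.carrier)} :=
      ⟨fun y => y.2 (hsub.elim y.1 x)⟩
    have : IsEmpty ipoEmpty.carrier := PEmpty.instIsEmpty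
    exact Equiv.equivOfIsEmpty _ _
  es := Fin.elim0
  et := Fin.elim0
  es_mono := fun k => k.elim0
  et_mono := fun k => k.elim0
  s_mem := fun i => by
    constructor
    · intro h; exact absurd (hsub.elim (Q.s i) x) h
    · rintro ⟨k, -⟩; exact k.elim0
  t_mem := fun j => by
    constructor
    · intro h; exact absurd (hsub.elim (Q.t j) x) h
    · rintro ⟨k, -⟩; exact k.elim0
  lt_iff := fun a => (a.2 (hsub.elim a.1 x)).elim
  s_eq := fun k => k.elim0
  t_eq := fun k => k.elim0

/-- The trivial removal: removing nothing. -/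
def remTrivial {n m : ℕ} (Q : Iposet n m) : RemData Q ∅ Q where
  f := Equiv.subtypeUnivEquiv (fun _ => Set.notMem_empty _)
  es := id
  et := id
  es_mono := strictMono_id
  et_mono := strictMono_id
  s_mem := fun i => ⟨fun _ => ⟨i, rfl⟩, fun _ => Set.notMem_empty _⟩
  t_mem := fun j => ⟨fun _ => ⟨j, rfl⟩, fun _ => Set.notMem_empty _⟩
  lt_iff := fun a b => Iff.rfl
  s_eq := fun k h => rfl
  t_eq := fun k h => rfl

/-- Transport of removal data along an isomorphism. -/
noncomputable def remIso {n m n' m' : ℕ} {P Q : Iposet n m} {R : Iposet n' m'}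
    {A : Set P.carrier} (g : P.carrier ≃ Q.carrier)
    (hlt : ∀ a b, P.lt a b ↔ Q.lt (g a) (g b))
    (hs : ∀ i, g (P.s i) = Q.s i) (ht : ∀ i, g (P.t i) = Q.t i)
    (D : RemData P A R) (B : Set Q.carrier)
    (hB : ∀ y, y ∈ B ↔ g.symm y ∈ A) : RemData Q B R where
  f := (Equiv.subtypeEquiv g.symm (fun y => by
      constructor
      · intro hy hA; exact hy ((hB y).mpr hA)
      · intro hy hBy; exact hy ((hB y).mp hBy))).trans D.f
  es := D.es
  et := D.et
  es_mono := D.es_mono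
  et_mono := D.et_mono
  s_mem := fun i => by
    rw [← D.s_mem i, hB, ← hs i, Equiv.symm_apply_apply]
  t_mem := fun j => by
    rw [← D.t_mem j, hB, ← ht j, Equiv.symm_apply_apply]
  lt_iff := fun a b => by
    have := hlt (g.symm a.1) (g.symm b.1)
    simp only [Equiv.apply_symm_apply] at this
    rw [← this]
    exact D.lt_iff ⟨g.symm a.1, _⟩ ⟨g.symm b.1, _⟩
  s_eq := fun k h => by
    have hA : P.s (D.es k) ∉ A := by
      rw [hB, ← hs (D.es k), Equiv.symm_apply_apply] at h; exact h
    rw [D.s_eq k hA]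
    simp only [Equiv.trans_apply, Equiv.subtypeEquiv_apply]
    congr 1
    ext
    simp [← hs (D.es k)]
  t_eq := fun k h => by
    have hA : P.t (D.et k) ∉ A := by
      rw [hB, ← ht (D.et k), Equiv.symm_apply_apply] at h; exact h
    rw [D.t_eq k hA]
    simp only [Equiv.trans_apply, Equiv.subtypeEquiv_apply]
    congr 1
    ext
    simp [← ht (D.et k)]

/-- Sum of two index maps. -/
def finSum {a b c d : ℕ} (u : Fin a → Fin c) (v : Fin b → Fin d) :
    Fin (a + b) → Fin (c + d) := fun i =>
  if h : (i : ℕ) < a then ⟨u ⟨i, h⟩, by have := (u ⟨i, h⟩).isLt; omega⟩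
  else ⟨c + (v ⟨(i : ℕ) - a, by have := i.isLt; omega⟩ : Fin d),
    by have := (v ⟨(i : ℕ) - a, by have := i.isLt; omega⟩).isLt; omega⟩

lemma finSum_mono {a b c d : ℕ} {u : Fin a → Fin c} {v : Fin b → Fin d}
    (hu : StrictMono u) (hv : StrictMono v) : StrictMono (finSum u v) := by
  intro i j hij
  have hij' : (i : ℕ) < (j : ℕ) := hij
  unfold finSum
  by_cases hi : (i : ℕ) < a <;> by_cases hj : (j : ℕ) < a
  · simp only [dif_pos hi, dif_pos hj, Fin.mk_lt_mk]
    exact hu (show ((⟨i, hi⟩ : Fin a) : ℕ) < (⟨j, hj⟩ : Fin a) from hij')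
  · simp only [dif_pos hi, dif_neg hj, Fin.mk_lt_mk]
    have := (u ⟨i, hi⟩).isLt; omega
  · omega
  · simp only [dif_neg hi, dif_neg hj, Fin.mk_lt_mk]
    apply Nat.add_lt_add_left
    exact hv (by rw [Fin.mk_lt_mk]; omega)

lemma finSum_apply_left {a b c d : ℕ} (u : Fin a → Fin c) (v : Fin b → Fin d)
    (k : Fin (a + b)) (h : (k : ℕ) < a) :
    ((finSum u v k : Fin (c + d)) : ℕ) = u ⟨k, h⟩ := by
  unfold finSum; rw [dif_pos h]

lemma finSum_apply_right {a b c d : ℕ} (u : Fin a → Fin c) (v : Fin b → Fin d)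
    (k : Fin (a + b)) (h : ¬ (k : ℕ) < a) :
    ((finSum u v k : Fin (c + d)) : ℕ) = c + v ⟨(k : ℕ) - a, by have := k.isLt; omega⟩ := by
  unfold finSum; rw [dif_neg h]

lemma finSum_mem {a b c d : ℕ} (u : Fin a → Fin c) (v : Fin b → Fin d)
    (i : Fin (c + d)) :
    (∃ k, finSum u v k = i) ↔
      (∃ (h : (i : ℕ) < c), ∃ k, u k = ⟨i, h⟩) ∨
      (∃ (_ : c ≤ (i : ℕ)), ∃ k, v k = ⟨(i : ℕ) - c, by have := i.isLt; omega⟩) := by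
  constructor
  · rintro ⟨k, rfl⟩
    unfold finSum
    by_cases hk : (k : ℕ) < a
    · rw [dif_pos hk]
      exact Or.inl ⟨(u ⟨k, hk⟩).isLt, ⟨k, hk⟩, rfl⟩
    · rw [dif_neg hk]
      refine Or.inr ⟨by simp, ⟨(k:ℕ) - a, by have := k.isLt; omega⟩, ?_⟩
      apply Fin.ext; simp
  · rintro (⟨h, k, hk⟩ | ⟨h, k, hk⟩)
    · have hk2 : (k : ℕ) < a + b := by have := k.isLt; omega
      refine ⟨⟨k, hk2⟩, Fin.ext ?_⟩
      rw [finSum_apply_left u v _ (show (((⟨(k : ℕ), hk2⟩ : Fin (a + b))) : ℕ) < a from k.isLt)]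
      exact congrArg Fin.val hk
    · have hk2 : a + (k : ℕ) < a + b := by have := k.isLt; omega
      refine ⟨⟨a + (k : ℕ), hk2⟩, Fin.ext ?_⟩
      rw [finSum_apply_right u v _ (by simp)]
      have h3 := congrArg Fin.val (congrArg v
        (show (⟨((⟨a + (k : ℕ), hk2⟩ : Fin (a + b)) : ℕ) - a,
            by have := k.isLt; omega⟩ : Fin b) = k from Fin.ext (by simp)))
      rw [h3]
      have := congrArg Fin.val hk
      simp at this ⊢
      omega

/-- Projection lemmas for `par` and `glue`. -/
lemma par_s_left {n₁ m₁ n₂ m₂ : ℕ} (P : Iposet n₁ m₁) (Q : Iposet n₂ m₂)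
    (i : Fin (n₁ + n₂)) (h : (i : ℕ) < n₁) :
    (P.par Q).s i = Sum.inl (P.s ⟨i, h⟩) := dif_pos h

lemma par_s_right {n₁ m₁ n₂ m₂ : ℕ} (P : Iposet n₁ m₁) (Q : Iposet n₂ m₂)
    (i : Fin (n₁ + n₂)) (h : ¬ (i : ℕ) < n₁) :
    (P.par Q).s i = Sum.inr (Q.s ⟨(i : ℕ) - n₁, by have := i.isLt; omega⟩) := dif_neg h

lemma par_t_left {n₁ m₁ n₂ m₂ : ℕ} (P : Iposet n₁ m₁) (Q : Iposet n₂ m₂)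
    (i : Fin (m₁ + m₂)) (h : (i : ℕ) < m₁) :
    (P.par Q).t i = Sum.inl (P.t ⟨i, h⟩) := dif_pos h

lemma par_t_right {n₁ m₁ n₂ m₂ : ℕ} (P : Iposet n₁ m₁) (Q : Iposet n₂ m₂)
    (i : Fin (m₁ + m₂)) (h : ¬ (i : ℕ) < m₁) :
    (P.par Q).t i = Sum.inr (Q.t ⟨(i : ℕ) - m₁, by have := i.isLt; omega⟩) := dif_neg h

/-- Removal data for a parallel composition. -/
noncomputable def remPar {n₁ m₁ n₂ m₂ n₁' m₁' n₂' m₂' : ℕ}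
    {P : Iposet n₁ m₁} {Q : Iposet n₂ m₂} {P' : Iposet n₁' m₁'} {Q' : Iposet n₂' m₂'}
    {A : Set P.carrier} {B : Set Q.carrier}
    (DP : RemData P A P') (DQ : RemData Q B Q')
    (C : Set (P.par Q).carrier)
    (hCl : ∀ a, (Sum.inl a : (P.par Q).carrier) ∈ C ↔ a ∈ A)
    (hCr : ∀ b, (Sum.inr b : (P.par Q).carrier) ∈ C ↔ b ∈ B) :
    RemData (P.par Q) C (P'.par Q') where
  f := {
    toFun := fun y => match y with
      | ⟨.inl a, h⟩ => .inl (DP.f ⟨a, fun hA => h ((hCl a).mpr hA)⟩)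
      | ⟨.inr b, h⟩ => .inr (DQ.f ⟨b, fun hB => h ((hCr b).mpr hB)⟩)
    invFun := fun z => match z with
      | .inl a' => ⟨.inl (DP.f.symm a').1, fun hC => (DP.f.symm a').2 ((hCl _).mp hC)⟩
      | .inr b' => ⟨.inr (DQ.f.symm b').1, fun hC => (DQ.f.symm b').2 ((hCr _).mp hC)⟩
    left_inv := by
      rintro ⟨a | b, h⟩ <;> apply Subtype.ext <;> simp <;> rfl
    right_inv := by
      rintro (a' | b') <;> simp <;> rfl }
  es := finSum DP.es DQ.es
  et := finSum DP.et DQ.et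
  es_mono := finSum_mono DP.es_mono DQ.es_mono
  et_mono := finSum_mono DP.et_mono DQ.et_mono
  s_mem := fun i => by
    rw [finSum_mem]
    by_cases h : (i : ℕ) < n₁
    · rw [par_s_left P Q i h]
      erw [hCl]
      rw [DP.s_mem]
      constructor
      · intro hk; exact Or.inl ⟨h, hk⟩
      · rintro (⟨h', k, hk⟩ | ⟨h', k, hk⟩)
        · exact ⟨k, hk⟩
        · omega
    · rw [par_s_right P Q i h]
      erw [hCr]
      rw [DQ.s_mem]
      constructor
      · intro hk; exact Or.inr ⟨by omega, hk⟩
      · rintro (⟨h', k, hk⟩ | ⟨h', k, hk⟩)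
        · omega
        · exact ⟨k, hk⟩
  t_mem := fun j => by
    rw [finSum_mem]
    by_cases h : (j : ℕ) < m₁
    · rw [par_t_left P Q j h]
      erw [hCl]
      rw [DP.t_mem]
      constructor
      · intro hk; exact Or.inl ⟨h, hk⟩
      · rintro (⟨h', k, hk⟩ | ⟨h', k, hk⟩)
        · exact ⟨k, hk⟩
        · omega
    · rw [par_t_right P Q j h]
      erw [hCr]
      rw [DQ.t_mem]
      constructor
      · intro hk; exact Or.inr ⟨by omega, hk⟩
      · rintro (⟨h', k, hk⟩ | ⟨h', k, hk⟩)
        · omega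
        · exact ⟨k, hk⟩
  lt_iff := fun a b => by
    obtain ⟨a | a, ha⟩ := a <;> obtain ⟨b | b, hb⟩ := b
    · exact DP.lt_iff ⟨a, _⟩ ⟨b, _⟩
    · exact Iff.rfl
    · exact Iff.rfl
    · exact DQ.lt_iff ⟨a, _⟩ ⟨b, _⟩
  s_eq := fun k h => by
    by_cases hk : (k : ℕ) < n₁'
    · have hv := finSum_apply_left DP.es DQ.es k hk
      have hi1 : ((finSum DP.es DQ.es k) : ℕ) < n₁ := by
        rw [hv]; exact (DP.es ⟨k, hk⟩).isLt
      have hxy : (P.par Q).s (finSum DP.es DQ.es k) = Sum.inl (P.s (DP.es ⟨k, hk⟩)) := by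
        rw [par_s_left P Q _ hi1]
        exact congrArg (fun z => Sum.inl (P.s z)) (Fin.ext hv)
      have hA : P.s (DP.es ⟨k, hk⟩) ∉ A := by
        intro hA'
        apply h
        rw [hxy]
        exact (hCl _).mpr hA'
      have h2 : (Sum.inl (P.s (DP.es ⟨k, hk⟩)) : (P.par Q).carrier) ∉ C :=
        fun hc => hA ((hCl _).mp hc)
      have harg : (⟨(P.par Q).s (finSum DP.es DQ.es k), h⟩ : {y // y ∉ C})
          = ⟨Sum.inl (P.s (DP.es ⟨k, hk⟩)), h2⟩ := Subtype.ext hxy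
      rw [harg, par_s_left P' Q' k hk]
      exact congrArg Sum.inl (DP.s_eq ⟨k, hk⟩ hA)
    · have hv := finSum_apply_right DP.es DQ.es k hk
      have hk' : (k : ℕ) - n₁' < n₂' := by have := k.isLt; omega
      have hi1 : ¬ ((finSum DP.es DQ.es k) : ℕ) < n₁ := by rw [hv]; omega
      have hxy : (P.par Q).s (finSum DP.es DQ.es k)
          = Sum.inr (Q.s (DQ.es ⟨(k : ℕ) - n₁', hk'⟩)) := by
        rw [par_s_right P Q _ hi1]
        refine congrArg (fun z => Sum.inr (Q.s z)) (Fin.ext ?_)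
        simp [hv]
      have hB : Q.s (DQ.es ⟨(k : ℕ) - n₁', hk'⟩) ∉ B := by
        intro hB'
        apply h
        rw [hxy]
        exact (hCr _).mpr hB'
      have h2 : (Sum.inr (Q.s (DQ.es ⟨(k : ℕ) - n₁', hk'⟩)) : (P.par Q).carrier) ∉ C :=
        fun hc => hB ((hCr _).mp hc)
      have harg : (⟨(P.par Q).s (finSum DP.es DQ.es k), h⟩ : {y // y ∉ C})
          = ⟨Sum.inr (Q.s (DQ.es ⟨(k : ℕ) - n₁', hk'⟩)), h2⟩ := Subtype.ext hxy
      rw [harg, par_s_right P' Q' k hk]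
      exact congrArg Sum.inr (DQ.s_eq ⟨(k : ℕ) - n₁', hk'⟩ hB)
  t_eq := fun k h => by
    by_cases hk : (k : ℕ) < m₁'
    · have hv := finSum_apply_left DP.et DQ.et k hk
      have hi1 : ((finSum DP.et DQ.et k) : ℕ) < m₁ := by
        rw [hv]; exact (DP.et ⟨k, hk⟩).isLt
      have hxy : (P.par Q).t (finSum DP.et DQ.et k) = Sum.inl (P.t (DP.et ⟨k, hk⟩)) := by
        rw [par_t_left P Q _ hi1]
        exact congrArg (fun z => Sum.inl (P.t z)) (Fin.ext hv)
      have hA : P.t (DP.et ⟨k, hk⟩) ∉ A := by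
        intro hA'
        apply h
        rw [hxy]
        exact (hCl _).mpr hA'
      have h2 : (Sum.inl (P.t (DP.et ⟨k, hk⟩)) : (P.par Q).carrier) ∉ C :=
        fun hc => hA ((hCl _).mp hc)
      have harg : (⟨(P.par Q).t (finSum DP.et DQ.et k), h⟩ : {y // y ∉ C})
          = ⟨Sum.inl (P.t (DP.et ⟨k, hk⟩)), h2⟩ := Subtype.ext hxy
      rw [harg, par_t_left P' Q' k hk]
      exact congrArg Sum.inl (DP.t_eq ⟨k, hk⟩ hA)
    · have hv := finSum_apply_right DP.et DQ.et k hk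
      have hk' : (k : ℕ) - m₁' < m₂' := by have := k.isLt; omega
      have hi1 : ¬ ((finSum DP.et DQ.et k) : ℕ) < m₁ := by rw [hv]; omega
      have hxy : (P.par Q).t (finSum DP.et DQ.et k)
          = Sum.inr (Q.t (DQ.et ⟨(k : ℕ) - m₁', hk'⟩)) := by
        rw [par_t_right P Q _ hi1]
        refine congrArg (fun z => Sum.inr (Q.t z)) (Fin.ext ?_)
        simp [hv]
      have hB : Q.t (DQ.et ⟨(k : ℕ) - m₁', hk'⟩) ∉ B := by
        intro hB'
        apply h
        rw [hxy]
        exact (hCr _).mpr hB'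
      have h2 : (Sum.inr (Q.t (DQ.et ⟨(k : ℕ) - m₁', hk'⟩)) : (P.par Q).carrier) ∉ C :=
        fun hc => hB ((hCr _).mp hc)
      have harg : (⟨(P.par Q).t (finSum DP.et DQ.et k), h⟩ : {y // y ∉ C})
          = ⟨Sum.inr (Q.t (DQ.et ⟨(k : ℕ) - m₁', hk'⟩)), h2⟩ := Subtype.ext hxy
      rw [harg, par_t_right P' Q' k hk]
      exact congrArg Sum.inr (DQ.t_eq ⟨(k : ℕ) - m₁', hk'⟩ hB)

lemma glue_s_eq {n m k : ℕ} (P : Iposet n m) (Q : Iposet m k) (i : Fin n) :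
    (P.glue Q).s i = Sum.inl (P.s i) := rfl

lemma glue_t_pos {n m k : ℕ} (P : Iposet n m) (Q : Iposet m k) (i : Fin k)
    (h : ∃ j, Q.s j = Q.t i) :
    (P.glue Q).t i = Sum.inl (P.t h.choose) := dif_pos h

lemma glue_t_neg {n m k : ℕ} (P : Iposet n m) (Q : Iposet m k) (i : Fin k)
    (h : ¬ ∃ j, Q.s j = Q.t i) :
    (P.glue Q).t i = Sum.inr ⟨Q.t i, h⟩ := dif_neg h

set_option maxHeartbeats 1000000 in
/-- Removal data for a gluing composition. -/
noncomputable def remGlue {n m k n' m' k' : ℕ}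
    {P : Iposet n m} {Q : Iposet m k} {P' : Iposet n' m'} {Q' : Iposet m' k'}
    {A : Set P.carrier} {B : Set Q.carrier}
    (DP : RemData P A P') (DQ : RemData Q B Q')
    (hAB : ∀ j : Fin m, P.t j ∈ A ↔ Q.s j ∈ B)
    (hmid : ∀ j, DP.et j = DQ.es j)
    (C : Set (P.glue Q).carrier)
    (hCl : ∀ a, (Sum.inl a : (P.glue Q).carrier) ∈ C ↔ a ∈ A)
    (hCr : ∀ q, (Sum.inr q : (P.glue Q).carrier) ∈ C ↔ q.1 ∈ B) :
    RemData (P.glue Q) C (P'.glue Q') where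
  f := {
    toFun := fun y => match y with
      | ⟨.inl a, h⟩ => .inl (DP.f ⟨a, fun hA => h ((hCl a).mpr hA)⟩)
      | ⟨.inr q, h⟩ => .inr ⟨DQ.f ⟨q.1, fun hB' => h ((hCr q).mpr hB')⟩, by
          rintro ⟨j, hj⟩
          have hsB : Q.s (DQ.es j) ∉ B := (DQ.s_mem _).mpr ⟨j, rfl⟩
          rw [DQ.s_eq j hsB] at hj
          exact q.2 ⟨DQ.es j, congrArg Subtype.val (DQ.f.injective hj)⟩⟩
    invFun := fun z => match z with
      | .inl p' => ⟨.inl (DP.f.symm p').1, fun hc => (DP.f.symm p').2 ((hCl _).mp hc)⟩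
      | .inr q' => ⟨.inr ⟨(DQ.f.symm q'.1).1, by
            rintro ⟨j, hj⟩
            have hjB : Q.s j ∉ B := by rw [hj]; exact (DQ.f.symm q'.1).2
            obtain ⟨c, hc⟩ := (DQ.s_mem j).mp hjB
            apply q'.2
            refine ⟨c, ?_⟩
            have hsB2 : Q.s (DQ.es c) ∉ B := by rw [hc]; exact hjB
            rw [DQ.s_eq c hsB2]
            have he : (⟨Q.s (DQ.es c), hsB2⟩ : {y // y ∉ B}) = DQ.f.symm q'.1 :=
              Subtype.ext (show Q.s (DQ.es c) = _ from by rw [hc]; exact hj)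
            rw [he, Equiv.apply_symm_apply]⟩,
          fun hc => (DQ.f.symm q'.1).2 ((hCr _).mp hc)⟩
    left_inv := by
      rintro ⟨a | q, h⟩ <;> apply Subtype.ext
      · simp; rfl
      · simp [Subtype.ext_iff]; rfl
    right_inv := by
      rintro (p' | q')
      · simp; rfl
      · simp [Subtype.ext_iff]; rfl }
  es := DP.es
  et := DQ.et
  es_mono := DP.es_mono
  et_mono := DQ.et_mono
  s_mem := fun i => by
    rw [glue_s_eq P Q i, ← DP.s_mem i]
    exact not_congr (hCl _)
  t_mem := fun j => by
    rw [← DQ.t_mem j]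
    by_cases hj : ∃ a, Q.s a = Q.t j
    · rw [glue_t_pos P Q j hj]
      have h1 := hAB hj.choose
      rw [hj.choose_spec] at h1
      exact not_congr ((hCl _).trans h1)
    · rw [glue_t_neg P Q j hj]
      exact not_congr (hCr _)
  lt_iff := fun a b => by
    obtain ⟨a | q, ha⟩ := a <;> obtain ⟨b | r, hb⟩ := b
    · exact DP.lt_iff ⟨a, _⟩ ⟨b, _⟩
    · -- inl a, inr r : the interesting case
      have paf : a ∉ A := fun h' => ha ((hCl a).mpr h')
      have prf : r.1 ∉ B := fun hB' => hb ((hCr r).mpr hB')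
      have key1 : (∃ i, P.t i = a) ↔ (∃ i', P'.t i' = DP.f ⟨a, paf⟩) := by
        constructor
        · rintro ⟨i, hi⟩
          have hA : P.t i ∉ A := by rw [hi]; exact paf
          obtain ⟨c, hc⟩ := (DP.t_mem i).mp hA
          have h0 : P.t (DP.et c) ∉ A := by rw [hc]; exact hA
          refine ⟨c, ?_⟩
          rw [DP.t_eq c h0]
          exact congrArg DP.f (Subtype.ext (show P.t (DP.et c) = a from by rw [hc]; exact hi))
        · rintro ⟨i', hi'⟩
          have h0 : P.t (DP.et i') ∉ A := (DP.t_mem _).mpr ⟨i', rfl⟩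
          rw [DP.t_eq i' h0] at hi'
          exact ⟨DP.et i', congrArg Subtype.val (DP.f.injective hi')⟩
      have key2 : (∃ i, P.t i = a ∧ Q.lt (Q.s i) r.1) ↔
          (∃ i', P'.t i' = DP.f ⟨a, paf⟩ ∧ Q'.lt (Q'.s i') (DQ.f ⟨r.1, prf⟩)) := by
        constructor
        · rintro ⟨i, hi, hlt⟩
          have hA : P.t i ∉ A := by rw [hi]; exact paf
          obtain ⟨c, hc⟩ := (DP.t_mem i).mp hA
          have h0 : P.t (DP.et c) ∉ A := by rw [hc]; exact hA
          have hB0 : Q.s i ∉ B := fun hbb => hA ((hAB i).mpr hbb)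
          have hB1 : Q.s (DQ.es c) ∉ B := by rw [← hmid, hc]; exact hB0
          refine ⟨c, ?_, ?_⟩
          · rw [DP.t_eq c h0]
            exact congrArg DP.f (Subtype.ext (show P.t (DP.et c) = a from by rw [hc]; exact hi))
          · rw [DQ.s_eq c hB1]
            have h2 : Q.lt (Q.s (DQ.es c)) r.1 := by rw [← hmid, hc]; exact hlt
            exact (DQ.lt_iff ⟨Q.s (DQ.es c), hB1⟩ ⟨r.1, prf⟩).mp h2
        · rintro ⟨i', h1, hlt'⟩
          have h0 : P.t (DP.et i') ∉ A := (DP.t_mem _).mpr ⟨i', rfl⟩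
          rw [DP.t_eq i' h0] at h1
          have ht : P.t (DP.et i') = a := congrArg Subtype.val (DP.f.injective h1)
          have hB1 : Q.s (DQ.es i') ∉ B := (DQ.s_mem _).mpr ⟨i', rfl⟩
          rw [DQ.s_eq i' hB1] at hlt'
          have h2 := (DQ.lt_iff ⟨Q.s (DQ.es i'), hB1⟩ ⟨r.1, prf⟩).mpr hlt'
          refine ⟨DP.et i', ht, ?_⟩
          rw [hmid]
          exact h2
      constructor
      · rintro (h | h)
        · exact Or.inl (fun he => h (key1.mpr he))
        · exact Or.inr (key2.mp h)
      · rintro (h | h)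
        · exact Or.inl (fun he => h (key1.mp he))
        · exact Or.inr (key2.mpr h)
    · exact Iff.rfl
    · exact DQ.lt_iff ⟨q.1, _⟩ ⟨r.1, _⟩
  s_eq := fun k' h => by
    have hA : P.s (DP.es k') ∉ A := fun h' => h ((hCl _).mpr h')
    show Sum.inl (P'.s k') = _
    exact congrArg Sum.inl (DP.s_eq k' hA)
  t_eq := fun k' h => by
    have hB0 : Q.t (DQ.et k') ∉ B := by
      by_cases hj : ∃ a, Q.s a = Q.t (DQ.et k')
      · intro hbb
        apply h
        rw [glue_t_pos P Q _ hj]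
        apply (hCl _).mpr
        apply (hAB hj.choose).mpr
        rw [hj.choose_spec]
        exact hbb
      · intro hbb
        apply h
        rw [glue_t_neg P Q _ hj]
        exact (hCr _).mpr hbb
    have hQt : Q'.t k' = DQ.f ⟨Q.t (DQ.et k'), hB0⟩ := DQ.t_eq k' hB0
    by_cases hj : ∃ a, Q.s a = Q.t (DQ.et k')
    · have hx : (P.glue Q).t (DQ.et k') = Sum.inl (P.t hj.choose) := glue_t_pos P Q _ hj
      have hsB : Q.s hj.choose ∉ B := by rw [hj.choose_spec]; exact hB0
      obtain ⟨c, hc⟩ := (DQ.s_mem hj.choose).mp hsB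
      have hsB2 : Q.s (DQ.es c) ∉ B := by rw [hc]; exact hsB
      have hj' : ∃ a', Q'.s a' = Q'.t k' := by
        refine ⟨c, ?_⟩
        rw [DQ.s_eq c hsB2, hQt]
        exact congrArg DQ.f (Subtype.ext (show Q.s (DQ.es c) = Q.t (DQ.et k') from by rw [hc]; exact hj.choose_spec))
      have hy : (P'.glue Q').t k' = Sum.inl (P'.t hj'.choose) := glue_t_pos P' Q' _ hj'
      have hd0 : Q.s (DQ.es hj'.choose) ∉ B := (DQ.s_mem _).mpr ⟨hj'.choose, rfl⟩
      have hd : Q.s (DQ.es hj'.choose) = Q.t (DQ.et k') := by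
        have e2 : DQ.f ⟨Q.s (DQ.es hj'.choose), hd0⟩ = DQ.f ⟨Q.t (DQ.et k'), hB0⟩ :=
          (DQ.s_eq hj'.choose hd0).symm.trans (hj'.choose_spec.trans hQt)
        exact congrArg Subtype.val (DQ.f.injective e2)
      have hde : DQ.es hj'.choose = hj.choose := Q.s_inj (hd.trans hj.choose_spec.symm)
      have hA : P.t (DP.et hj'.choose) ∉ A := by
        rw [hmid, hde]
        intro ha
        exact hsB ((hAB hj.choose).mp ha)
      have hA2 : P.t hj.choose ∉ A := by rw [← hde, ← hmid]; exact hA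
      have hfin : P'.t hj'.choose = DP.f ⟨P.t hj.choose, hA2⟩ := by
        rw [DP.t_eq hj'.choose hA]
        exact congrArg DP.f (Subtype.ext (show P.t (DP.et hj'.choose) = P.t hj.choose from by rw [hmid, hde]))
      have harg : (⟨(P.glue Q).t (DQ.et k'), h⟩ : {y // y ∉ C})
          = ⟨Sum.inl (P.t hj.choose), hx ▸ h⟩ := Subtype.ext hx
      rw [harg, hy, hfin]
      rfl
    · have hx : (P.glue Q).t (DQ.et k') = Sum.inr ⟨Q.t (DQ.et k'), hj⟩ := glue_t_neg P Q _ hj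
      have hj' : ¬ ∃ a', Q'.s a' = Q'.t k' := by
        rintro ⟨a', ha'⟩
        have hd0 : Q.s (DQ.es a') ∉ B := (DQ.s_mem _).mpr ⟨a', rfl⟩
        rw [DQ.s_eq a' hd0, hQt] at ha'
        exact hj ⟨DQ.es a', congrArg Subtype.val (DQ.f.injective ha')⟩
      have hy : (P'.glue Q').t k' = Sum.inr ⟨Q'.t k', hj'⟩ := glue_t_neg P' Q' _ hj'
      have harg : (⟨(P.glue Q).t (DQ.et k'), h⟩ : {y // y ∉ C})
          = ⟨Sum.inr ⟨Q.t (DQ.et k'), hj⟩, hx ▸ h⟩ := Subtype.ext hx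
      rw [harg, hy]
      exact congrArg Sum.inr (Subtype.ext hQt)

/-- Removing any single point from a gp-iposet yields a gp-iposet (with the
interfaces suitably restricted). -/
lemma isGP_remove : ∀ {n m : ℕ} {Q : Iposet n m}, IsGP Q →
    ∀ x : Q.carrier, ∃ (n' m' : ℕ) (R : Iposet n' m'),
      IsGP R ∧ Nonempty (RemData Q {x} R) := by
  intro n m Q hQ
  induction hQ with
  | empty => intro x; exact x.elim
  | s00 => intro x
           exact ⟨0, 0, ipoEmpty, IsGP.empty,
             ⟨remPunit _ ⟨fun a b => by cases a; cases b; rfl⟩ x⟩⟩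
  | s01 => intro x
           exact ⟨0, 0, ipoEmpty, IsGP.empty,
             ⟨remPunit _ ⟨fun a b => by cases a; cases b; rfl⟩ x⟩⟩
  | s10 => intro x
           exact ⟨0, 0, ipoEmpty, IsGP.empty,
             ⟨remPunit _ ⟨fun a b => by cases a; cases b; rfl⟩ x⟩⟩
  | s11 => intro x
           exact ⟨0, 0, ipoEmpty, IsGP.empty,
             ⟨remPunit _ ⟨fun a b => by cases a; cases b; rfl⟩ x⟩⟩
  | @glue n1 m1 k1 P1 Q1 hP1 hQ1 ih1 ih2 =>
    rintro (p | q)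
    · obtain ⟨n₁', m₁', P', hgpP, ⟨DP⟩⟩ := ih1 p
      by_cases hpt : ∃ j₀, P1.t j₀ = p
      · obtain ⟨j₀, hj₀⟩ := hpt
        obtain ⟨m₂', k₂', Q', hgpQ, ⟨DQ⟩⟩ := ih2 (Q1.s j₀)
        have hrange : ∀ i, (∃ c, DP.et c = i) ↔ (∃ c, DQ.es c = i) := by
          intro i
          rw [← DP.t_mem, ← DQ.s_mem]
          simp only [Set.mem_singleton_iff]
          constructor
          · intro h1 h2
            exact h1 (by rw [Q1.s_inj h2, hj₀])
          · intro h1 h2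
            apply h1
            rw [P1.t_inj (h2.trans hj₀.symm)]
        obtain ⟨he, hfg⟩ := strictMono_align DP.et DQ.es DP.et_mono DQ.es_mono hrange
        subst he
        refine ⟨n₁', k₂', P'.glue Q', IsGP.glue hgpP hgpQ,
          ⟨remGlue DP DQ ?_ (fun j => hfg j) _ ?_ ?_⟩⟩
        · intro j
          simp only [Set.mem_singleton_iff]
          constructor
          · intro h2
            rw [P1.t_inj (h2.trans hj₀.symm)]
          · intro h2
            rw [Q1.s_inj h2, hj₀]
        · intro a
          simp only [Set.mem_singleton_iff, Sum.inl.injEq]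
          exact Set.mem_singleton_iff.trans Sum.inl.inj_iff
        · intro q
          simp only [Set.mem_singleton_iff]
          constructor
          · intro h2; exact absurd h2 (by rintro ⟨⟩)
          · intro h2; exact (q.2 ⟨j₀, h2.symm⟩).elim
      · obtain ⟨he, hfg⟩ := strictMono_align DP.et (fun j => j) DP.et_mono
          strictMono_id (by
            intro i
            rw [← DP.t_mem]
            simp only [Set.mem_singleton_iff]
            constructor
            · intro _; exact ⟨i, rfl⟩
            · intro _ h2; exact hpt ⟨i, h2⟩)
        subst he
        refine ⟨n₁', k1, P'.glue Q1, IsGP.glue hgpP hQ1,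
          ⟨remGlue DP (remTrivial Q1) ?_ (fun j => hfg j) _ ?_ ?_⟩⟩
        · intro j
          simp only [Set.mem_singleton_iff]
          constructor
          · intro h2; exact (hpt ⟨j, h2⟩).elim
          · intro h2; exact (Set.notMem_empty _ h2).elim
        · intro a
          simp only [Set.mem_singleton_iff, Sum.inl.injEq]
          exact Set.mem_singleton_iff.trans Sum.inl.inj_iff
        · intro q
          show _ = _ ↔ _
          constructor
          · intro h2; exact absurd h2 (by simp)
          · intro h2; exact (Set.notMem_empty _ h2).elim
    · obtain ⟨m₂', k₂', Q', hgpQ, ⟨DQ⟩⟩ := ih2 q.1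
      have hrange : ∀ i, (∃ c, (fun (j : Fin m1) => j) c = i) ↔ (∃ c, DQ.es c = i) := by
        intro i
        rw [← DQ.s_mem]
        simp only [Set.mem_singleton_iff]
        constructor
        · intro _ h2; exact q.2 ⟨i, h2⟩
        · intro _; exact ⟨i, rfl⟩
      obtain ⟨he, hfg⟩ := strictMono_align (fun j => j) DQ.es strictMono_id
        DQ.es_mono hrange
      subst he
      refine ⟨n1, k₂', P1.glue Q', IsGP.glue hP1 hgpQ,
        ⟨remGlue (remTrivial P1) DQ ?_ (fun j => hfg j) _ ?_ ?_⟩⟩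
      · intro j
        simp only [Set.mem_singleton_iff]
        constructor
        · intro h2; exact (Set.notMem_empty _ h2).elim
        · intro h2; exact (q.2 ⟨j, h2⟩).elim
      · intro a
        show _ = _ ↔ _
        constructor
        · intro h2; exact absurd h2 (by simp)
        · intro h2; exact (Set.notMem_empty _ h2).elim
      · intro r
        simp only [Set.mem_singleton_iff, Sum.inr.injEq]
        exact Set.mem_singleton_iff.trans (Sum.inr.inj_iff.trans Subtype.ext_iff)
  | @par n1 m1 n2 m2 P1 Q1 hP1 hQ1 ih1 ih2 =>
    rintro (p | q)
    · obtain ⟨n₁', m₁', P', hgpP, ⟨DP⟩⟩ := ih1 p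
      refine ⟨n₁' + n2, m₁' + m2, P'.par Q1, IsGP.par hgpP hQ1,
        ⟨remPar DP (remTrivial Q1) _ ?_ ?_⟩⟩
      · intro a
        simp only [Set.mem_singleton_iff, Sum.inl.injEq]
        exact Set.mem_singleton_iff.trans Sum.inl.inj_iff
      · intro b
        show _ = _ ↔ _
        constructor
        · intro h2; exact absurd h2 (by simp)
        · intro h2; exact (Set.notMem_empty _ h2).elim
    · obtain ⟨n₂', m₂', Q', hgpQ, ⟨DQ⟩⟩ := ih2 q
      refine ⟨n1 + n₂', m1 + m₂', P1.par Q', IsGP.par hP1 hgpQ,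
        ⟨remPar (remTrivial P1) DQ _ ?_ ?_⟩⟩
      · intro a
        show _ = _ ↔ _
        constructor
        · intro h2; exact absurd h2 (by simp)
        · intro h2; exact (Set.notMem_empty _ h2).elim
      · intro b
        simp only [Set.mem_singleton_iff, Sum.inr.injEq]
        exact Set.mem_singleton_iff.trans Sum.inr.inj_iff
  | @iso n1 m1 n1' m1' P1 Q1 hP1 hiso ih =>
    obtain ⟨hn, hm, g, hlt, hs, ht⟩ := hiso
    subst hn
    subst hm
    intro x
    obtain ⟨a, b, R, hgp, ⟨D⟩⟩ := ih (g.symm x)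
    refine ⟨a, b, R, hgp,
      ⟨remIso g hlt (fun i => hs i i rfl) (fun i => ht i i rfl) D {x} ?_⟩⟩
    intro y
    simp only [Set.mem_singleton_iff]
    exact ⟨fun h => by rw [h], fun h => g.symm.injective h⟩

end Iposet

open Iposet in
/-- Gluing-parallel posets are closed under induced subposets: removing a
point from a gp-poset yields a gp-poset. -/
theorem gp_closed_under_point_removal (P : Iposet 0 0) (hP : IsGP P)
    (x : P.carrier) :
    IsGP (P.restrict {y | y ≠ x}) := by
  obtain ⟨n', m', R, hgp, ⟨D⟩⟩ := isGP_remove hP x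
  have hn : n' = 0 := by
    by_contra hh
    exact (D.es ⟨0, Nat.pos_of_ne_zero hh⟩).elim0
  have hm : m' = 0 := by
    by_contra hh
    exact (D.et ⟨0, Nat.pos_of_ne_zero hh⟩).elim0
  subst hn
  subst hm
  refine IsGP.iso hgp ⟨rfl, rfl, D.f.symm.trans (Equiv.subtypeEquivRight ?_),
    ?_, ?_, ?_⟩
  · intro y
    simp [Set.mem_singleton_iff]
  · intro a b
    have h := D.lt_iff (D.f.symm a) (D.f.symm b)
    simp only [Equiv.apply_symm_apply] at h
    exact h.symm
  · intro i; exact i.elim0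
  · intro i; exact i.elim0
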